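/- arXiv:0911.4968 — 2 statements merged into one kernel-verified Lean document; each statement's English description precedes it below -/
import Mathlib

section
/- The function a(ω) = (1/8)e^{iω ln 4} + (9/2)e^{iω ln 2} - 22·(3/4)²·e^{iω ln(4/3)} + 7 satisfies |a(ω)| ≥ 3/4 for all real ω. -/
theorem stmt_0 (a : ℝ → ℂ)
    (ha : ∀ ω : ℝ, a ω = (1/8) * Complex.exp (Complex.I * ω * Real.log 4)
      + (9/2) * Complex.exp (Complex.I * ω * Real.log 2)
      - (99/8) * Complex.exp (Complex.I * ω * Real.log (4/3)) + 7) :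
    ∀ ω : ℝ, (3/4 : ℝ) ≤ ‖a ω‖ := by
  intro ω
  rw [ha ω]
  set E4 := Complex.exp (Complex.I * ω * Real.log 4) with hE4
  set E2 := Complex.exp (Complex.I * ω * Real.log 2) with hE2
  set E43 := Complex.exp (Complex.I * ω * Real.log (4/3)) with hE43
  have habs : ∀ r : ℝ, ‖Complex.exp (Complex.I * ω * r)‖ = 1 := by
    intro r
    rw [Complex.norm_exp]
    simp [Complex.mul_re]
  have h4 : ‖E4‖ = 1 := habs _
  have h2 : ‖E2‖ = 1 := habs _
  have h43 : ‖E43‖ = 1 := habs _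
  have hre : (1/8) * E4 + (9/2) * E2 - (99/8) * E43 + 7
      = ((1/8) * E4 + (9/2) * E2 + 7) - (99/8) * E43 := by ring
  rw [hre]
  have hB : ‖(99/8 : ℂ) * E43‖ = 99/8 := by
    rw [norm_mul, h43, mul_one]
    rw [show ((99:ℂ)/8) = ((99/8:ℝ):ℂ) by norm_num, Complex.norm_real, Real.norm_eq_abs]
    norm_num
  have hA : ‖(1/8 : ℂ) * E4 + (9/2) * E2 + 7‖ ≤ 93/8 := by
    calc ‖(1/8 : ℂ) * E4 + (9/2) * E2 + 7‖
        ≤ ‖(1/8 : ℂ) * E4 + (9/2) * E2‖ + ‖(7 : ℂ)‖ :=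
          norm_add_le _ _
      _ ≤ ‖(1/8 : ℂ) * E4‖ + ‖(9/2 : ℂ) * E2‖ + ‖(7 : ℂ)‖ := by
          gcongr; exact norm_add_le _ _
      _ = 93/8 := by
          rw [norm_mul, norm_mul, h4, h2, mul_one, mul_one]
          rw [show ((1:ℂ)/8) = ((1/8:ℝ):ℂ) by norm_num, Complex.norm_real, Real.norm_eq_abs,
            show ((9:ℂ)/2) = ((9/2:ℝ):ℂ) by norm_num, Complex.norm_real, Real.norm_eq_abs,
            show ((7:ℂ)) = ((7:ℝ):ℂ) by norm_num, Complex.norm_real, Real.norm_eq_abs]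
          rw [abs_of_nonneg (by norm_num : (0:ℝ) ≤ 1/8),
            abs_of_nonneg (by norm_num : (0:ℝ) ≤ 9/2),
            abs_of_nonneg (by norm_num : (0:ℝ) ≤ 7)]
          norm_num
  have key : ‖(99/8 : ℂ) * E43‖ - ‖(1/8 : ℂ) * E4 + (9/2) * E2 + 7‖
      ≤ ‖(1/8 : ℂ) * E4 + (9/2) * E2 + 7 - (99/8) * E43‖ := by
    rw [norm_sub_rev]
    exact norm_sub_norm_le _ _
  rw [hB] at key
  linarith
end

section
/- For each dyadic scale n ∈ ℤ, averaging the Haar shift kernel over random dyadic shifts produces a convolution: ∫₀¹ ∑_{k∈ℤ} (1/L)·h((x/L) - k - s)·g((y/L) - k - s) ds = (1/L)·(h∗g₁)((x-y)/L), where L = r·2ⁿ and g₁(t) = g(-t). -/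
open MeasureTheory

/-- Averaging over the random shift s produces a convolution:
∫₀¹ ∑ₖ (1/L) h(x/L - k - s) g(y/L - k - s) ds = (1/L)(h∗g₁)((x-y)/L). -/
theorem stmt_8 (h g : ℝ → ℝ) (Ch Cg : ℝ)
    (hh : ∀ t, |h t| ≤ Ch) (hg : ∀ t, |g t| ≤ Cg)
    (hhm : Measurable h) (hgm : Measurable g)
    (hhsupp : ∀ t, t ∉ Set.Icc (0:ℝ) 1 → h t = 0)
    (hgsupp : ∀ t, t ∉ Set.Icc (0:ℝ) 1 → g t = 0)
    (L : ℝ) (hL : 0 < L) (x y : ℝ) :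
    (∫ s in (0:ℝ)..1, ∑' k : ℤ, (1/L) * h (x/L - k - s) * g (y/L - k - s))
      = (1/L) * ∫ t : ℝ, h t * g (t - (x - y)/L) := by
  set c := x / L with hc
  set Δ := (x - y) / L with hΔ
  have hcd : c - Δ = y / L := by
    rw [hc, hΔ]; field_simp; ring
  set f : ℝ → ℝ := fun t => h t * g (t - Δ) with hf
  set F : ℝ → ℝ := fun u => f (c - u) with hF
  have hfm : Measurable f := hhm.mul (hgm.comp (measurable_id.sub measurable_const))
  have hfsupp : ∀ t, t ∉ Set.Icc (0:ℝ) 1 → f t = 0 := fun t ht => by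
    simp [hf, hhsupp t ht]
  have hfi : Integrable f := by
    have h1 : IntegrableOn f (Set.Icc (0:ℝ) 1) := by
      refine ⟨hfm.aestronglyMeasurable, ?_⟩
      apply HasFiniteIntegral.of_bounded (C := |Ch| * |Cg|)
      filter_upwards with t
      simp only [hf, Real.norm_eq_abs, abs_mul]
      exact mul_le_mul ((hh t).trans (le_abs_self Ch)) ((hg _).trans (le_abs_self Cg))
        (abs_nonneg _) (abs_nonneg _)
    have h2 : Set.indicator (Set.Icc (0:ℝ) 1) f = f :=
      Set.indicator_eq_self.2 (Function.support_subset_iff'.2 hfsupp)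
    rw [← h2]
    exact (integrable_indicator_iff measurableSet_Icc).2 h1
  have hFi : Integrable F := hfi.comp_sub_left c
  set m := ⌈c⌉ with hm
  have hmc : c ≤ (m:ℝ) := Int.le_ceil c
  have hmc' : (m:ℝ) < c + 1 := Int.ceil_lt_add_one c
  -- Step 1 : rewrite the integrand as a finite sum
  have step1 : (∫ s in (0:ℝ)..1, ∑' k : ℤ, (1/L) * h (c - k - s) * g (y/L - k - s))
      = ∫ s in (0:ℝ)..1, ∑ k ∈ Finset.Icc (m-3) m, (1/L) * F (k + s) := by
    apply intervalIntegral.integral_congr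
    intro s hs
    rw [Set.uIcc_of_le (by norm_num : (0:ℝ) ≤ 1)] at hs
    obtain ⟨hs0, hs1⟩ := hs
    have harg : ∀ k : ℤ, (1/L) * h (c - k - s) * g (y/L - k - s) = (1/L) * F (k + s) := by
      intro k
      have e1 : c - (↑k + s) = c - ↑k - s := by ring
      have e2 : c - ↑k - s - Δ = y/L - ↑k - s := by rw [← hcd]; ring
      simp only [hF, hf, e1, e2, mul_assoc]
    simp only [harg]
    apply tsum_eq_sum
    intro k hk
    rw [Finset.mem_Icc] at hk
    push_neg at hk
    have hzero : F (↑k + s) = 0 := by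
      have : c - (↑k + s) ∉ Set.Icc (0:ℝ) 1 := by
        simp only [Set.mem_Icc, not_and_or, not_le]
        rcases lt_or_ge k (m-3) with hk1 | hk2
        · right
          have hk4 : k ≤ m - 4 := by omega
          have : (k:ℝ) ≤ (m:ℝ) - 4 := by exact_mod_cast hk4
          linarith
        · left
          have hk3 := hk hk2
          have : (m:ℝ) + 1 ≤ (k:ℝ) := by exact_mod_cast hk3
          linarith
      simp only [hF, hf, hhsupp _ this, zero_mul]
    rw [hzero, mul_zero]
  rw [step1]
  have hint : ∀ k : ℤ, IntervalIntegrable (fun s => (1/L) * F (↑k + s)) volume 0 1 := by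
    intro k
    exact (((hFi.comp_add_left (k:ℝ)).const_mul (1/L)).intervalIntegrable)
  rw [intervalIntegral.integral_finset_sum (fun k _ => hint k)]
  -- evaluate each term
  have key : ∀ k : ℤ, (∫ s in (0:ℝ)..1, (1/L) * F (↑k + s))
      = (1/L) * ∫ u in (k:ℝ)..((k:ℝ)+1), F u := by
    intro k
    rw [intervalIntegral.integral_const_mul]
    congr 1
    have : (fun s => F (↑k + s)) = fun s => F (s + ↑k) := by
      funext s; rw [add_comm]
    rw [intervalIntegral.integral_congr (g := fun s => F (s + (k:ℝ))) (fun s _ => by rw [add_comm])]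
    rw [intervalIntegral.integral_comp_add_right F (k:ℝ), zero_add, add_comm (1:ℝ) (k:ℝ)]
  simp only [key]
  rw [← Finset.mul_sum]
  congr 1
  -- sum of adjacent integrals
  have hII : ∀ a b : ℝ, IntervalIntegrable F volume a b := fun a b => hFi.intervalIntegrable
  have hicc : Finset.Icc (m-3) m = {m-3, m-2, m-1, m} := by
    ext k
    simp only [Finset.mem_Icc, Finset.mem_insert, Finset.mem_singleton]
    omega
  rw [hicc]
  rw [Finset.sum_insert (by simp only [Finset.mem_insert, Finset.mem_singleton]; omega),
    Finset.sum_insert (by simp only [Finset.mem_insert, Finset.mem_singleton]; omega),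
    Finset.sum_insert (by simp only [Finset.mem_singleton]; omega),
    Finset.sum_singleton]
  have c1 : ((m-3 : ℤ) : ℝ) = (m:ℝ) - 3 := by push_cast; ring
  have c2 : ((m-2 : ℤ) : ℝ) = (m:ℝ) - 2 := by push_cast; ring
  have c3 : ((m-1 : ℤ) : ℝ) = (m:ℝ) - 1 := by push_cast; ring
  rw [c1, c2, c3]
  have e1 : (m:ℝ) - 3 + 1 = (m:ℝ) - 2 := by ring
  have e2 : (m:ℝ) - 2 + 1 = (m:ℝ) - 1 := by ring
  have e3 : (m:ℝ) - 1 + 1 = (m:ℝ) := by ring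
  rw [e1, e2, e3]
  rw [intervalIntegral.integral_add_adjacent_intervals (hII _ _) (hII _ _),
    intervalIntegral.integral_add_adjacent_intervals (hII _ _) (hII _ _),
    intervalIntegral.integral_add_adjacent_intervals (hII _ _) (hII _ _)]
  -- ∫_{m-3}^{m+1} F = ∫ F
  rw [intervalIntegral.integral_of_le (by linarith : (m:ℝ) - 3 ≤ (m:ℝ) + 1)]
  rw [setIntegral_eq_integral_of_forall_compl_eq_zero]
  · exact integral_sub_left_eq_self f volume c
  · intro u hu
    simp only [Set.mem_Ioc, not_and_or, not_lt, not_le] at hu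
    apply hfsupp
    simp only [Set.mem_Icc, not_and_or, not_le]
    rcases hu with h1 | h2
    · right; linarith
    · left; linarith
end
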